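/- Let α, β ∈ ℂ be complex numbers satisfying α + β = 1 + i and αβ = 1, where i denotes the imaginary unit, for j = 0, 1, 2, 3 set v_j = (α^j, conj(β)^j) ∈ ℂ × ℂ, and let Λ be the additive subgroup of ℂ × ℂ generated by v₀, v₁, v₂, v₃. Then the ℂ-linear map T : ℂ × ℂ → ℂ × ℂ defined by T(x, y) = (α·x, conj(β)·y) maps Λ onto itself: the image T(Λ) equals Λ. -/

import Mathlib

theorem lattice_invariant (α β : ℂ)
    (hsum : α + β = 1 + Complex.I) (hprod : α * β = 1)
    (v : Fin 4 → ℂ × ℂ)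
    (hv : ∀ j : Fin 4, v j = (α ^ (j : ℕ), (starRingEnd ℂ β) ^ (j : ℕ)))
    (Λ : AddSubgroup (ℂ × ℂ)) (hΛ : Λ = AddSubgroup.closure (Set.range v))
    (T : ℂ × ℂ → ℂ × ℂ)
    (hT : ∀ p : ℂ × ℂ, T p = (α * p.1, starRingEnd ℂ β * p.2)) :
    T '' (Λ : Set (ℂ × ℂ)) = (Λ : Set (ℂ × ℂ)) := by
  set c : ℂ := starRingEnd ℂ β with hc
  have hv0 : v 0 = (1, 1) := by simpa using hv 0
  have hv1 : v 1 = (α, c) := by simpa using hv 1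
  have hv2 : v 2 = (α ^ 2, c ^ 2) := by simpa using hv 2
  have hv3 : v 3 = (α ^ 3, c ^ 3) := by simpa using hv 3
  have hα0 : α ≠ 0 := by
    intro h; rw [h, zero_mul] at hprod; exact one_ne_zero hprod.symm
  have hβ0 : β ≠ 0 := by
    intro h; rw [h, mul_zero] at hprod; exact one_ne_zero hprod.symm
  have hc0 : c ≠ 0 := by simpa [hc] using hβ0
  have h2 : α ^ 2 = (1 + Complex.I) * α - 1 := by
    linear_combination α * hsum - hprod
  have hb2 : β ^ 2 = (1 + Complex.I) * β - 1 := by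
    linear_combination β * hsum - hprod
  have hc2 : c ^ 2 = (1 - Complex.I) * c - 1 := by
    have := congrArg (starRingEnd ℂ) hb2
    simp [map_pow, map_mul, map_sub, map_add, map_one, Complex.conj_I] at this
    rw [hc]; linear_combination this
  have h4a : α ^ 4 = 2 * α ^ 3 - 4 * α ^ 2 + 2 * α - 1 := by
    linear_combination (α ^ 2 - (1 - Complex.I) * α + 1) * h2 + α ^ 2 * Complex.I_sq
  have h4c : c ^ 4 = 2 * c ^ 3 - 4 * c ^ 2 + 2 * c - 1 := by
    linear_combination (c ^ 2 - (1 + Complex.I) * c + 1) * hc2 + c ^ 2 * Complex.I_sq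
  have hvmem : ∀ j : Fin 4, v j ∈ Λ := by
    intro j
    rw [hΛ]
    exact AddSubgroup.subset_closure (Set.mem_range_self j)
  -- forward inclusion: T maps Λ into Λ
  have hfwd : ∀ p ∈ Λ, T p ∈ Λ := by
    intro p hp
    rw [hΛ] at hp
    induction hp using AddSubgroup.closure_induction with
    | mem x hx =>
      obtain ⟨j, rfl⟩ := hx
      fin_cases j
      · show T (v 0) ∈ Λ
        have : T (v 0) = v 1 := by
          rw [hT, hv0, hv1]; exact Prod.ext (by simp) (by simp)
        rw [this]; exact hvmem 1
      · show T (v 1) ∈ Λ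
        have : T (v 1) = v 2 := by
          rw [hT, hv1, hv2]; exact Prod.ext (by ring) (by ring)
        rw [this]; exact hvmem 2
      · show T (v 2) ∈ Λ
        have : T (v 2) = v 3 := by
          rw [hT, hv2, hv3]; exact Prod.ext (by ring) (by ring)
        rw [this]; exact hvmem 3
      · show T (v 3) ∈ Λ
        have : T (v 3) = (2 : ℤ) • v 3 + (-4 : ℤ) • v 2 + (2 : ℤ) • v 1 + (-1 : ℤ) • v 0 := by
          rw [hT, hv0, hv1, hv2, hv3]
          refine Prod.ext ?_ ?_
          · simp only [Prod.fst_add, Prod.smul_fst]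
            push_cast [zsmul_eq_mul]
            linear_combination h4a
          · simp only [Prod.snd_add, Prod.smul_snd]
            push_cast [zsmul_eq_mul]
            linear_combination h4c
        rw [this]
        exact add_mem (add_mem (add_mem (zsmul_mem (hvmem 3) 2) (zsmul_mem (hvmem 2) (-4)))
          (zsmul_mem (hvmem 1) 2)) (zsmul_mem (hvmem 0) (-1))
    | zero => simp [hT]; exact Λ.zero_mem
    | add x y hx hy ihx ihy =>
      have : T (x + y) = T x + T y := by
        rw [hT, hT, hT]; exact Prod.ext (by simp; ring) (by simp; ring)
      rw [this]; exact add_mem ihx ihy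
    | neg x hx ihx =>
      have : T (-x) = -(T x) := by
        rw [hT, hT]; exact Prod.ext (by simp) (by simp)
      rw [this]; exact neg_mem ihx
  -- inverse map
  set S : ℂ × ℂ → ℂ × ℂ := fun p => (α⁻¹ * p.1, c⁻¹ * p.2) with hS
  have hTS : ∀ p, T (S p) = p := by
    intro p
    rw [hT]
    refine Prod.ext ?_ ?_ <;> simp [hS] <;> field_simp
  have hbwd : ∀ p ∈ Λ, S p ∈ Λ := by
    intro p hp
    rw [hΛ] at hp
    induction hp using AddSubgroup.closure_induction with
    | mem x hx =>
      obtain ⟨j, rfl⟩ := hx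
      fin_cases j
      · show S (v 0) ∈ Λ
        have : S (v 0) = (2 : ℤ) • v 2 + (-4 : ℤ) • v 1 + (2 : ℤ) • v 0 + (-1 : ℤ) • v 3 := by
          rw [hv0, hv1, hv2, hv3]
          simp only [hS]
          refine Prod.ext ?_ ?_
          · simp only [Prod.fst_add, Prod.smul_fst]
            push_cast [zsmul_eq_mul]
            field_simp
            linear_combination h4a
          · simp only [Prod.snd_add, Prod.smul_snd]
            push_cast [zsmul_eq_mul]
            field_simp
            linear_combination h4c
        rw [this]
        exact add_mem (add_mem (add_mem (zsmul_mem (hvmem 2) 2) (zsmul_mem (hvmem 1) (-4)))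
          (zsmul_mem (hvmem 0) 2)) (zsmul_mem (hvmem 3) (-1))
      · show S (v 1) ∈ Λ
        have : S (v 1) = v 0 := by
          rw [hv0, hv1]
          simp only [hS]
          refine Prod.ext ?_ ?_ <;> simp <;> field_simp
        rw [this]; exact hvmem 0
      · show S (v 2) ∈ Λ
        have : S (v 2) = v 1 := by
          rw [hv1, hv2]
          simp only [hS]
          refine Prod.ext ?_ ?_ <;> simp <;> field_simp <;> ring
        rw [this]; exact hvmem 1
      · show S (v 3) ∈ Λ
        have : S (v 3) = v 2 := by
          rw [hv2, hv3]
          simp only [hS]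
          refine Prod.ext ?_ ?_ <;> simp <;> field_simp <;> ring
        rw [this]; exact hvmem 2
    | zero => simp [hS]; exact Λ.zero_mem
    | add x y hx hy ihx ihy =>
      have : S (x + y) = S x + S y := by
        simp only [hS, Prod.fst_add, Prod.snd_add]
        exact Prod.ext (by simp; ring) (by simp; ring)
      rw [this]; exact add_mem ihx ihy
    | neg x hx ihx =>
      have : S (-x) = -(S x) := by
        simp [hS]
      rw [this]; exact neg_mem ihx
  apply Set.Subset.antisymm
  · rintro _ ⟨p, hp, rfl⟩
    exact hfwd p hp
  · intro p hp
    exact ⟨S p, hbwd p hp, hTS p⟩
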